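/- For every ε > 0, the number of integers d ≤ N that do NOT have a divisor d₀ > N^{1-ε} with ω(d₀) < ε · log log N is o(N) as N → ∞. -/

import Mathlib

open Filter
open scoped Classical

namespace TypicalDivisorAux

open Finset Nat

lemma legendre_ge (n p : ℕ) (hp : p.Prime) (hpn : p ≤ n) :
    n / p ≤ (n !).factorization p := by
  have : Fact p.Prime := ⟨hp⟩
  rw [Nat.factorization_def _ hp,
    padicValNat_factorial (b := Nat.log p n + 1) (Nat.lt_succ_self _)]
  have h1 : 1 ∈ Finset.Ico 1 (Nat.log p n + 1) := by
    simp [Nat.log_pos hp.one_lt hpn]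
  simpa using Finset.single_le_sum (f := fun i => n / p ^ i) (fun i _ => Nat.zero_le _) h1

lemma sum_log_primes_le (n : ℕ) :
    ∑ p ∈ (range (n+1)).filter Nat.Prime, Real.log p ≤ n * Real.log 4 := by
  have h0 : ∀ p ∈ (range (n+1)).filter Nat.Prime, (p:ℝ) ≠ 0 := by
    intro p hp
    exact_mod_cast (Nat.Prime.pos (mem_filter.1 hp).2).ne'
  rw [← Real.log_prod h0]
  calc Real.log (∏ p ∈ (range (n+1)).filter Nat.Prime, (p:ℝ))
      = Real.log (primorial n) := by rw [primorial]; push_cast; rfl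
    _ ≤ Real.log ((4:ℝ)^n) := by
        apply Real.log_le_log (by exact_mod_cast primorial_pos n)
        exact_mod_cast primorial_le_4_pow n
    _ = n * Real.log 4 := by rw [Real.log_pow]

lemma mertens (n : ℕ) (hn : 1 ≤ n) :
    ∑ p ∈ (range (n+1)).filter Nat.Prime, Real.log p / p
      ≤ Real.log n + Real.log 4 := by
  set P := (range (n+1)).filter Nat.Prime with hP
  have hprime : ∀ p ∈ P, p.Prime := fun p hp => (mem_filter.1 hp).2
  have hle : ∀ p ∈ P, p ≤ n := fun p hp => Nat.lt_succ_iff.1 (mem_range.1 (mem_filter.1 hp).1)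
  have hnpos : (0:ℝ) < n := by exact_mod_cast hn
  have hfacne : n ! ≠ 0 := (Nat.factorial_pos n).ne'
  have step1 : ∑ p ∈ P, ((n / p : ℕ) : ℝ) * Real.log p ≤ Real.log (n !) := by
    rw [Real.log_nat_eq_sum_factorization, Finsupp.sum, Nat.support_factorization]
    calc ∑ p ∈ P, ((n / p : ℕ) : ℝ) * Real.log p
        ≤ ∑ p ∈ P, ((n !).factorization p : ℝ) * Real.log p := by
          apply Finset.sum_le_sum
          intro p hp
          have hlog : 0 ≤ Real.log p := Real.log_nonneg (by exact_mod_cast (hprime p hp).one_lt.le)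
          exact mul_le_mul_of_nonneg_right
            (by exact_mod_cast legendre_ge n p (hprime p hp) (hle p hp)) hlog
      _ ≤ ∑ p ∈ (n !).primeFactors, ((n !).factorization p : ℝ) * Real.log p := by
          apply Finset.sum_le_sum_of_subset_of_nonneg
          · intro p hp
            exact Nat.mem_primeFactors.2
              ⟨hprime p hp, (hprime p hp).dvd_factorial.2 (hle p hp), hfacne⟩
          · intro p _ _
            exact mul_nonneg (Nat.cast_nonneg _) (Real.log_natCast_nonneg p)
  have step2 : Real.log (n !) ≤ n * Real.log n := by
    calc Real.log (n !) ≤ Real.log ((n:ℝ)^n) := by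
          apply Real.log_le_log (by exact_mod_cast Nat.factorial_pos n)
          exact_mod_cast Nat.factorial_le_pow n
      _ = n * Real.log n := Real.log_pow n n
  have step3 : ∑ p ∈ P, (n:ℝ)/p * Real.log p
      ≤ n * Real.log n + n * Real.log 4 := by
    have h1 : ∑ p ∈ P, (n:ℝ)/p * Real.log p
        ≤ ∑ p ∈ P, (((n / p : ℕ) : ℝ) + 1) * Real.log p := by
      apply Finset.sum_le_sum
      intro p hp
      have hppos : (0:ℝ) < p := by exact_mod_cast (hprime p hp).pos
      have h2 : (n:ℝ)/p ≤ ((n / p : ℕ) : ℝ) + 1 := by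
        rw [div_le_iff₀ hppos]
        exact_mod_cast ((Nat.div_lt_iff_lt_mul (hprime p hp).pos).1 (Nat.lt_succ_self _)).le
      exact mul_le_mul_of_nonneg_right h2 (Real.log_natCast_nonneg p)
    refine h1.trans ?_
    have h3 : ∑ p ∈ P, (((n / p : ℕ) : ℝ) + 1) * Real.log p
        = (∑ p ∈ P, ((n / p : ℕ) : ℝ) * Real.log p) + ∑ p ∈ P, Real.log p := by
      rw [← Finset.sum_add_distrib]
      apply Finset.sum_congr rfl
      intro p _
      ring
    rw [h3]
    exact add_le_add (step1.trans step2) (sum_log_primes_le n)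
  have key : (n:ℝ) * ∑ p ∈ P, Real.log p / p = ∑ p ∈ P, (n:ℝ)/p * Real.log p := by
    rw [Finset.mul_sum]
    apply Finset.sum_congr rfl
    intro p _
    ring
  have := key.trans_le step3
  rw [← mul_add] at this
  exact le_of_mul_le_mul_left this hnpos

/-- The `y`-smooth part of `d`. -/
noncomputable def sm (y : ℝ) (d : ℕ) : ℕ :=
  ∏ p ∈ d.primeFactors.filter (fun p : ℕ => (p:ℝ) ≤ y), p ^ d.factorization p

/-- The `y`-rough part of `d`. -/
noncomputable def rg (y : ℝ) (d : ℕ) : ℕ :=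
  ∏ p ∈ d.primeFactors.filter (fun p : ℕ => ¬ (p:ℝ) ≤ y), p ^ d.factorization p

lemma sm_mul_rg (y : ℝ) (d : ℕ) (hd : d ≠ 0) : sm y d * rg y d = d := by
  rw [sm, rg, Finset.prod_filter_mul_prod_filter_not]
  have h := Nat.factorization_prod_pow_eq_self hd
  rwa [Finsupp.prod, Nat.support_factorization] at h

lemma sm_pos (y : ℝ) (d : ℕ) (hd : d ≠ 0) : 0 < sm y d := by
  have : sm y d ∣ d := Dvd.intro _ (sm_mul_rg y d hd)
  exact Nat.pos_of_dvd_of_pos this (Nat.pos_of_ne_zero hd)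

lemma log_sm (y : ℝ) (N d : ℕ) (hd : d ∈ Finset.Icc 1 N) :
    Real.log (sm y d) =
      ∑ p ∈ (range (N+1)).filter (fun p : ℕ => p.Prime ∧ (p:ℝ) ≤ y),
        ((d.factorization p : ℝ) * Real.log p) := by
  have hd1 : 1 ≤ d := (Finset.mem_Icc.1 hd).1
  have hdN : d ≤ N := (Finset.mem_Icc.1 hd).2
  have hd0 : d ≠ 0 := by omega
  rw [sm, Nat.cast_prod, Real.log_prod]
  · push_cast
    rw [Finset.sum_congr rfl (g := fun p : ℕ => (d.factorization p : ℝ) * Real.log p)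
      (fun p _ => by rw [Real.log_pow])]
    apply Finset.sum_subset
    · intro p hp
      have hp' := Finset.mem_filter.1 hp
      have hpf := hp'.1
      exact Finset.mem_filter.2 ⟨Finset.mem_range.2 (Nat.lt_succ_of_le
        ((Nat.le_of_mem_primeFactors hpf).trans hdN)),
        Nat.prime_of_mem_primeFactors hpf, hp'.2⟩
    · intro p hp hnp
      have : d.factorization p = 0 := by
        by_contra h
        have hpmem : p ∈ d.primeFactors := by
          rw [← Nat.support_factorization]
          exact Finsupp.mem_support_iff.2 h
        exact hnp (Finset.mem_filter.2 ⟨hpmem, (Finset.mem_filter.1 hp).2.2⟩)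
      simp [this]
  · intro p hp
    have hpp := Nat.prime_of_mem_primeFactors (Finset.mem_filter.1 hp).1
    exact_mod_cast (pow_pos hpp.pos _).ne'

lemma fact_factorization_le (N p : ℕ) (hp : p.Prime) :
    ((N !).factorization p : ℝ) ≤ 2 * N / p := by
  have : Fact p.Prime := ⟨hp⟩
  have hp2 : (2:ℝ) ≤ p := by exact_mod_cast hp.two_le
  have hppos : (0:ℝ) < p := by linarith
  rw [Nat.factorization_def _ hp,
    padicValNat_factorial (b := Nat.log p N + 1) (Nat.lt_succ_self _)]
  push_cast
  calc (∑ i ∈ Finset.Ico 1 (Nat.log p N + 1), ((N / p ^ i : ℕ) : ℝ))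
      ≤ ∑ i ∈ Finset.Ico 1 (Nat.log p N + 1), (N : ℝ) * (1/p) ^ i := by
        apply Finset.sum_le_sum
        intro i _
        rw [div_pow, one_pow, mul_div_assoc']
        rw [mul_one]
        calc ((N / p ^ i : ℕ) : ℝ) ≤ (N : ℝ) / (p ^ i : ℕ) := by
              apply Nat.cast_div_le
          _ = (N : ℝ) / (p:ℝ) ^ i := by push_cast; ring
    _ = (N : ℝ) * ∑ i ∈ Finset.Ico 1 (Nat.log p N + 1), (1/(p:ℝ)) ^ i := by
        rw [Finset.mul_sum]
    _ ≤ (N : ℝ) * ((1/(p:ℝ)) ^ 1 / (1 - 1/p)) := by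
        apply mul_le_mul_of_nonneg_left _ (Nat.cast_nonneg N)
        apply geom_sum_Ico_le_of_lt_one (by positivity)
        rw [div_lt_one hppos]; linarith
    _ ≤ 2 * N / p := by
        rw [pow_one]
        have h1 : 1 - 1/(p:ℝ) ≥ 1/2 := by
          rw [ge_iff_le, le_sub_iff_add_le]
          have : 1/(p:ℝ) ≤ 1/2 := by
            apply div_le_div_of_nonneg_left <;> linarith
          linarith
        have h2 : (1/(p:ℝ)) / (1 - 1/p) ≤ (1/p) / (1/2) := by
          apply div_le_div_of_nonneg_left (by positivity) (by linarith) (by linarith)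
        calc (N:ℝ) * ((1/(p:ℝ)) / (1 - 1/p)) ≤ (N:ℝ) * ((1/p) / (1/2)) :=
              mul_le_mul_of_nonneg_left h2 (Nat.cast_nonneg N)
          _ = 2 * N / p := by field_simp

lemma sum_factorization (N p : ℕ) :
    ∑ d ∈ Finset.Icc 1 N, d.factorization p = (N !).factorization p := by
  have h1 : (N ! : ℕ) = ∏ d ∈ Finset.Icc 1 N, d := by
    rw [← Finset.prod_Ico_id_eq_factorial, Finset.Ico_add_one_right_eq_Icc]
  rw [h1, Nat.factorization_prod (fun x hx => by
    have := (Finset.mem_Icc.1 hx).1; omega)]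
  rw [Finset.sum_apply']

lemma sum_log_sm_le (N : ℕ) (y : ℝ) (hy : 1 ≤ y) :
    ∑ d ∈ Finset.Icc 1 N, Real.log (sm y d)
      ≤ 2 * N * (Real.log y + Real.log 4) := by
  have hyfl : 1 ≤ ⌊y⌋₊ := Nat.le_floor (by exact_mod_cast hy)
  rw [Finset.sum_congr rfl (fun d hd => log_sm y N d hd), Finset.sum_comm]
  set P := (range (N+1)).filter (fun p : ℕ => p.Prime ∧ (p:ℝ) ≤ y) with hP
  have hprime : ∀ p ∈ P, p.Prime := fun p hp => (Finset.mem_filter.1 hp).2.1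
  calc ∑ p ∈ P, ∑ d ∈ Finset.Icc 1 N, ((d.factorization p : ℝ) * Real.log p)
      = ∑ p ∈ P, ((N !).factorization p : ℝ) * Real.log p := by
        apply Finset.sum_congr rfl
        intro p _
        rw [← Finset.sum_mul, ← sum_factorization N p]
        push_cast
        ring
    _ ≤ ∑ p ∈ P, (2 * N / p) * Real.log p := by
        apply Finset.sum_le_sum
        intro p hp
        exact mul_le_mul_of_nonneg_right (fact_factorization_le N p (hprime p hp))
          (Real.log_natCast_nonneg p)
    _ = 2 * N * ∑ p ∈ P, Real.log p / p := by
        rw [Finset.mul_sum]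
        apply Finset.sum_congr rfl
        intro p _
        ring
    _ ≤ 2 * N * ∑ p ∈ (range (⌊y⌋₊+1)).filter Nat.Prime, Real.log p / p := by
        apply mul_le_mul_of_nonneg_left _ (by positivity)
        apply Finset.sum_le_sum_of_subset_of_nonneg
        · intro p hp
          have hp' := Finset.mem_filter.1 hp
          refine Finset.mem_filter.2 ⟨Finset.mem_range.2 (Nat.lt_succ_of_le ?_), hp'.2.1⟩
          exact Nat.le_floor hp'.2.2
        · intro p hp _
          have := (Finset.mem_filter.1 hp).2
          positivity
    _ ≤ 2 * N * (Real.log ⌊y⌋₊ + Real.log 4) := by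
        apply mul_le_mul_of_nonneg_left (mertens _ hyfl) (by positivity)
    _ ≤ 2 * N * (Real.log y + Real.log 4) := by
        apply mul_le_mul_of_nonneg_left _ (by positivity)
        have : Real.log ⌊y⌋₊ ≤ Real.log y :=
          Real.log_le_log (by exact_mod_cast hyfl) (Nat.floor_le (by linarith))
        linarith

lemma rg_primeFactors_subset (y : ℝ) (d : ℕ) :
    (rg y d).primeFactors ⊆ d.primeFactors.filter (fun p : ℕ => ¬ (p:ℝ) ≤ y) := by
  intro q hq
  have hqp : q.Prime := Nat.prime_of_mem_primeFactors hq
  have hqdvd : q ∣ rg y d := Nat.dvd_of_mem_primeFactors hq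
  rw [rg] at hqdvd
  obtain ⟨p, hpF, hqp'⟩ := hqp.prime.exists_mem_finset_dvd hqdvd
  have : q = p := by
    have hpprime : p.Prime :=
      Nat.prime_of_mem_primeFactors (Finset.mem_filter.1 hpF).1
    exact (Nat.prime_dvd_prime_iff_eq hqp hpprime).1 (hqp.dvd_of_dvd_pow hqp')
  exact this ▸ hpF

lemma exists_good_divisor (N d : ℕ) (ε y : ℝ) (hN : 1 ≤ N)
    (hy : 1 < y) (hd : d ∈ Finset.Icc 1 N)
    (hbig : (N:ℝ) ^ (1 - ε/2) < d) (hsm : (sm y d : ℝ) ≤ (N:ℝ) ^ (ε/2)) :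
    ∃ d₀ : ℕ, d₀ ∣ d ∧ (N : ℝ) ^ (1 - ε) < d₀ ∧
      ((d₀.primeFactors.card : ℝ)) * Real.log y ≤ Real.log N := by
  have hd1 : 1 ≤ d := (Finset.mem_Icc.1 hd).1
  have hdN : d ≤ N := (Finset.mem_Icc.1 hd).2
  have hd0 : d ≠ 0 := by omega
  have hNpos : (0:ℝ) < N := by exact_mod_cast hN
  have heq := sm_mul_rg y d hd0
  refine ⟨rg y d, Dvd.intro_left _ heq, ?_, ?_⟩
  · -- size bound
    have hsmpos : (0:ℝ) < sm y d := by exact_mod_cast sm_pos y d hd0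
    have hrg : (rg y d : ℝ) = (d:ℝ) / sm y d := by
      rw [eq_div_iff hsmpos.ne', mul_comm]
      exact_mod_cast heq
    rw [hrg]
    have hNe : (0:ℝ) < (N:ℝ) ^ (ε/2) := Real.rpow_pos_of_pos hNpos _
    calc (N:ℝ) ^ (1-ε) = (N:ℝ) ^ (1-ε/2) / (N:ℝ) ^ (ε/2) := by
          rw [← Real.rpow_sub hNpos]; ring_nf
      _ < (d:ℝ) / (N:ℝ) ^ (ε/2) := div_lt_div_of_pos_right hbig hNe
      _ ≤ (d:ℝ) / sm y d := by
          apply div_le_div_of_nonneg_left (by positivity) hsmpos hsm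
  · -- prime factor count bound
    set F := d.primeFactors.filter (fun p : ℕ => ¬ (p:ℝ) ≤ y) with hF
    have hsub := rg_primeFactors_subset y d
    have hcard : ((rg y d).primeFactors.card : ℝ) ≤ F.card := by
      exact_mod_cast Finset.card_le_card hsub
    have hkey : (F.card : ℝ) * Real.log y ≤ Real.log N := by
      have h1 : (F.card : ℝ) * Real.log y ≤ ∑ p ∈ F, Real.log p := by
        calc (F.card : ℝ) * Real.log y = ∑ _p ∈ F, Real.log y := by
              rw [Finset.sum_const, nsmul_eq_mul]
          _ ≤ ∑ p ∈ F, Real.log p := by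
              apply Finset.sum_le_sum
              intro p hp
              have hyp : y < p := by
                have := (Finset.mem_filter.1 hp).2
                linarith [not_le.1 this]
              exact (Real.log_le_log (by linarith) hyp.le)
      have hdvd : (∏ p ∈ F, p) ∣ d := by
        calc (∏ p ∈ F, p) ∣ ∏ p ∈ F, p ^ d.factorization p := by
              apply Finset.prod_dvd_prod_of_dvd
              intro p hp
              apply dvd_pow_self
              have : p ∈ d.primeFactors := (Finset.mem_filter.1 hp).1
              exact (Nat.Prime.factorization_pos_of_dvd
                (Nat.prime_of_mem_primeFactors this) hd0
                (Nat.dvd_of_mem_primeFactors this)).ne'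
          _ = rg y d := rfl
          _ ∣ d := Dvd.intro_left _ heq
      have h2 : ∑ p ∈ F, Real.log p = Real.log (∏ p ∈ F, (p:ℝ)) := by
        rw [Real.log_prod]
        intro p hp
        exact_mod_cast (Nat.prime_of_mem_primeFactors (Finset.mem_filter.1 hp).1).pos.ne'
      have h3 : (∏ p ∈ F, (p:ℝ)) ≤ (N:ℝ) := by
        have : (∏ p ∈ F, p) ≤ N := (Nat.le_of_dvd (by omega) hdvd).trans hdN
        calc (∏ p ∈ F, (p:ℝ)) = ((∏ p ∈ F, p : ℕ) : ℝ) := by push_cast; rfl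
          _ ≤ (N:ℝ) := by exact_mod_cast this
      have h4 : Real.log (∏ p ∈ F, (p:ℝ)) ≤ Real.log N := by
        apply Real.log_le_log ?_ h3
        apply Finset.prod_pos
        intro p hp
        exact_mod_cast (Nat.prime_of_mem_primeFactors (Finset.mem_filter.1 hp).1).pos
      linarith [h1, h2 ▸ h4]
    calc ((rg y d).primeFactors.card : ℝ) * Real.log y ≤ (F.card : ℝ) * Real.log y := by
          apply mul_le_mul_of_nonneg_right hcard
          exact Real.log_nonneg hy.le
      _ ≤ Real.log N := hkey

lemma markov (s : Finset ℕ) (f : ℕ → ℝ) (t : ℝ)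
    (hf : ∀ d ∈ s, 0 ≤ f d) :
    ((s.filter (fun d => t < f d)).card : ℝ) * t ≤ ∑ d ∈ s, f d := by
  calc ((s.filter (fun d => t < f d)).card : ℝ) * t
      = ∑ _d ∈ s.filter (fun d => t < f d), t := by
        rw [Finset.sum_const, nsmul_eq_mul]
    _ ≤ ∑ d ∈ s.filter (fun d => t < f d), f d := by
        apply Finset.sum_le_sum
        intro d hd
        exact ((Finset.mem_filter.1 hd).2).le
    _ ≤ ∑ d ∈ s, f d := by
        apply Finset.sum_le_sum_of_subset_of_nonneg (Finset.filter_subset _ _)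
        intro d hd _
        exact hf d hd

end TypicalDivisorAux

open TypicalDivisorAux Finset Nat in
/-- For every `ε > 0`, the number of integers `d ≤ N` that do not possess a
divisor `d₀ > N^(1-ε)` with fewer than `ε · log log N` distinct prime factors
is `o(N)` as `N → ∞`. -/
theorem typical_integer_has_large_smooth_divisor (ε : ℝ) (hε : 0 < ε) :
    (fun N : ℕ =>
      (((Finset.Icc 1 N).filter (fun d =>
        ¬ ∃ d₀ : ℕ, d₀ ∣ d ∧ (N : ℝ) ^ (1 - ε) < (d₀ : ℝ) ∧
          (d₀.primeFactors.card : ℝ) < ε * Real.log (Real.log N))).card : ℝ))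
      =o[atTop] (fun N : ℕ => (N : ℝ)) := by
  set L : ℕ → ℝ := fun N => Real.log (Real.log N) with hLdef
  set y : ℕ → ℝ := fun N => Real.exp (2 * Real.log N / (ε * L N)) with hydef
  set F : ℕ → Finset ℕ := fun N => (Finset.Icc 1 N).filter (fun d =>
        ¬ ∃ d₀ : ℕ, d₀ ∣ d ∧ (N : ℝ) ^ (1 - ε) < (d₀ : ℝ) ∧
          (d₀.primeFactors.card : ℝ) < ε * Real.log (Real.log N)) with hFdef
  have hLL : Tendsto L atTop atTop :=
    Real.tendsto_log_atTop.comp (Real.tendsto_log_atTop.comp tendsto_natCast_atTop_atTop)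
  have hlog : Tendsto (fun N : ℕ => Real.log N) atTop atTop :=
    Real.tendsto_log_atTop.comp tendsto_natCast_atTop_atTop
  rw [Asymptotics.isLittleO_iff_tendsto']
  swap
  · filter_upwards [eventually_ge_atTop 1] with N hN h0
    exfalso
    have : (0:ℝ) < N := by exact_mod_cast hN
    linarith [h0 ▸ this]
  -- the squeeze
  set b : ℕ → ℝ := fun N => (N:ℝ) ^ (-(ε/2)) +
    (8/ε^2 * (L N)⁻¹ + (4*Real.log 4/ε) * (Real.log N)⁻¹) with hbdef
  apply squeeze_zero' (g := b)
  · filter_upwards [eventually_ge_atTop 1] with N hN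
    positivity
  · -- main estimate
    filter_upwards [eventually_ge_atTop 3, hLL.eventually (eventually_gt_atTop 1)]
      with N hN3 hL1
    have hN1 : 1 ≤ N := by omega
    have hNpos : (0:ℝ) < N := by exact_mod_cast hN1
    have hlogNpos : (1:ℝ) < Real.log N := by
      have h3 : (3:ℝ) ≤ (N:ℝ) := by exact_mod_cast hN3
      have he := Real.exp_one_lt_d9
      calc (1:ℝ) = Real.log (Real.exp 1) := (Real.log_exp 1).symm
        _ < Real.log 3 := Real.log_lt_log (Real.exp_pos 1) (by linarith)
        _ ≤ Real.log N := Real.log_le_log (by norm_num) h3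
    have hLpos : (0:ℝ) < L N := by linarith
    have hlogy : Real.log (y N) = 2 * Real.log N / (ε * L N) := Real.log_exp _
    have hlogypos : 0 < Real.log (y N) := by
      rw [hlogy]; positivity
    have hy1 : 1 < y N := by
      show (1:ℝ) < Real.exp (2 * Real.log N / (ε * L N))
      have hpos : (0:ℝ) < 2 * Real.log N / (ε * L N) := by positivity
      calc (1:ℝ) = Real.exp 0 := Real.exp_zero.symm
        _ < _ := Real.exp_lt_exp.2 hpos
    -- bad sets
    set B1 : Finset ℕ := (Finset.Icc 1 N).filter
      (fun d : ℕ => (d:ℝ) ≤ (N:ℝ) ^ (1 - ε/2)) with hB1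
    set B2 : Finset ℕ := (Finset.Icc 1 N).filter
      (fun d : ℕ => (ε/2) * Real.log N < Real.log (sm (y N) d)) with hB2
    have hsubset : F N ⊆ B1 ∪ B2 := by
      intro d hd
      obtain ⟨hdIcc, hnot⟩ := Finset.mem_filter.1 hd
      by_cases h1 : (d:ℝ) ≤ (N:ℝ) ^ (1 - ε/2)
      · exact Finset.mem_union_left _ (Finset.mem_filter.2 ⟨hdIcc, h1⟩)
      by_cases h2 : (ε/2) * Real.log N < Real.log (sm (y N) d)
      · exact Finset.mem_union_right _ (Finset.mem_filter.2 ⟨hdIcc, h2⟩)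
      exfalso
      apply hnot
      have hd0 : d ≠ 0 := by
        have := (Finset.mem_Icc.1 hdIcc).1; omega
      have hsmle : (sm (y N) d : ℝ) ≤ (N:ℝ) ^ (ε/2) := by
        have hsmpos : (0:ℝ) < sm (y N) d := by exact_mod_cast sm_pos (y N) d hd0
        have := not_lt.1 h2
        calc (sm (y N) d : ℝ) = Real.exp (Real.log (sm (y N) d)) :=
              (Real.exp_log hsmpos).symm
          _ ≤ Real.exp ((ε/2) * Real.log N) := Real.exp_le_exp.2 this
          _ = (N:ℝ) ^ (ε/2) := by
              rw [Real.rpow_def_of_pos hNpos, mul_comm]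
      obtain ⟨d₀, hdvd, hbig, hcard⟩ :=
        exists_good_divisor N d ε (y N) hN1 hy1 hdIcc (not_le.1 h1) hsmle
      refine ⟨d₀, hdvd, hbig, ?_⟩
      have h3 : (d₀.primeFactors.card : ℝ) ≤ Real.log N / Real.log (y N) :=
        (le_div_iff₀ hlogypos).2 hcard
      have h4 : Real.log N / Real.log (y N) = ε * L N / 2 := by
        rw [hlogy]
        field_simp
      rw [h4] at h3
      calc (d₀.primeFactors.card : ℝ) ≤ ε * L N / 2 := h3
        _ < ε * L N := by
            have : 0 < ε * L N := by positivity
            linarith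
    -- counting
    have hcard1 : (B1.card : ℝ) ≤ (N:ℝ) ^ (1 - ε/2) := by
      have hsub : B1 ⊆ Finset.Icc 1 ⌊(N:ℝ) ^ (1 - ε/2)⌋₊ := by
        intro d hd
        obtain ⟨hdIcc, hdle⟩ := Finset.mem_filter.1 hd
        exact Finset.mem_Icc.2 ⟨(Finset.mem_Icc.1 hdIcc).1, Nat.le_floor hdle⟩
      calc (B1.card : ℝ) ≤ ((Finset.Icc 1 ⌊(N:ℝ) ^ (1 - ε/2)⌋₊).card : ℝ) := by
            exact_mod_cast Finset.card_le_card hsub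
        _ = (⌊(N:ℝ) ^ (1 - ε/2)⌋₊ : ℝ) := by
            rw [Nat.card_Icc]; push_cast; ring
        _ ≤ (N:ℝ) ^ (1 - ε/2) := Nat.floor_le (by positivity)
    have hcard2 : (B2.card : ℝ) * ((ε/2) * Real.log N)
        ≤ 2 * N * (Real.log (y N) + Real.log 4) := by
      refine (markov _ _ _ ?_).trans (sum_log_sm_le N (y N) hy1.le)
      intro d _
      exact Real.log_natCast_nonneg _
    have htpos : (0:ℝ) < (ε/2) * Real.log N := by positivity
    have hcard2' : (B2.card : ℝ) ≤ (N:ℝ) *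
        (8/ε^2 * (L N)⁻¹ + (4*Real.log 4/ε) * (Real.log N)⁻¹) := by
      have := (le_div_iff₀ htpos).2 hcard2
      refine this.trans (le_of_eq ?_)
      rw [hlogy]
      field_simp
      ring
    -- combine
    have hcards : ((F N).card : ℝ) ≤ (B1.card : ℝ) + (B2.card : ℝ) := by
      have := (Finset.card_le_card hsubset).trans (Finset.card_union_le B1 B2)
      exact_mod_cast this
    rw [div_le_iff₀ hNpos, hbdef]
    have hfirst : (N:ℝ) ^ (1 - ε/2) = (N:ℝ) ^ (-(ε/2)) * N := by
      rw [show (1 - ε/2) = -(ε/2) + 1 by ring, Real.rpow_add hNpos, Real.rpow_one]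
    calc ((F N).card : ℝ) ≤ (B1.card : ℝ) + (B2.card : ℝ) := hcards
      _ ≤ (N:ℝ) ^ (1 - ε/2) +
          (N:ℝ) * (8/ε^2 * (L N)⁻¹ + (4*Real.log 4/ε) * (Real.log N)⁻¹) :=
            add_le_add hcard1 hcard2'
      _ = ((N:ℝ) ^ (-(ε/2)) +
          (8/ε^2 * (L N)⁻¹ + (4*Real.log 4/ε) * (Real.log N)⁻¹)) * N := by
            rw [hfirst]; ring
  · -- b tends to zero
    have t1 : Tendsto (fun N : ℕ => (N:ℝ) ^ (-(ε/2))) atTop (nhds 0) :=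
      (tendsto_rpow_neg_atTop (by linarith)).comp tendsto_natCast_atTop_atTop
    have t2 : Tendsto (fun N : ℕ => 8/ε^2 * (L N)⁻¹) atTop (nhds 0) := by
      have := hLL.inv_tendsto_atTop
      simpa using this.const_mul (8/ε^2)
    have t3 : Tendsto (fun N : ℕ => (4*Real.log 4/ε) * (Real.log N)⁻¹) atTop (nhds 0) := by
      have := hlog.inv_tendsto_atTop
      simpa using this.const_mul (4*Real.log 4/ε)
    have := t1.add (t2.add t3)
    simpa using this
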